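/- Let A be an m×n real matrix and α > 0 a real number, and let g_α(x,y) = ((I+α²AAᵀ)⁻¹(Ay + α AAᵀ x), (I+α²AᵀA)⁻¹(−Aᵀx + α AᵀA y)) be the CGO field of the bilinear game f(x,y) = xᵀAy. If (x,y) ∈ ℝᵐ × ℝⁿ satisfies Aᵀx ≠ 0 or Ay ≠ 0, then ⟨g_α(x,y),(x,y)⟩ > 0. In particular, if A is square and invertible then ⟨g_α(z),z⟩ > 0 for every z ≠ 0, so the saddle point 0 of the bilinear game satisfies the strict α-Minty variational inequality. -/

import Mathlib

open Matrix

/-- The CGO field of the bilinear game `f(x,y) = xᵀ A y`. -/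
noncomputable def gCGO {m n : ℕ} (A : Matrix (Fin m) (Fin n) ℝ) (α : ℝ)
    (x : Fin m → ℝ) (y : Fin n → ℝ) : (Fin m → ℝ) × (Fin n → ℝ) :=
  (((1 + α ^ 2 • (A * Aᵀ))⁻¹).mulVec (A.mulVec y + α • (A * Aᵀ).mulVec x),
   ((1 + α ^ 2 • (Aᵀ * A))⁻¹).mulVec (-(Aᵀ.mulVec x) + α • (Aᵀ * A).mulVec y))

lemma smul_posSemidef' {k : ℕ} {S : Matrix (Fin k) (Fin k) ℝ} (hS : S.PosSemidef) (c : ℝ)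
    (hc : 0 ≤ c) : (c • S).PosSemidef := by
  refine PosSemidef.of_dotProduct_mulVec_nonneg ?_ (fun x => ?_)
  · unfold Matrix.IsHermitian
    rw [conjTranspose_smul, hS.1]; simp
  · rw [smul_mulVec, dotProduct_smul, smul_eq_mul]
    exact mul_nonneg hc (hS.dotProduct_mulVec_nonneg x)

lemma posDef_one_add' {k : ℕ} {S : Matrix (Fin k) (Fin k) ℝ} (hS : S.PosSemidef) (c : ℝ)
    (hc : 0 ≤ c) : (1 + c • S).PosDef :=
  Matrix.PosDef.add_posSemidef Matrix.PosDef.one (smul_posSemidef' hS c hc)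

lemma dot_swap' {m n : ℕ} (A : Matrix (Fin m) (Fin n) ℝ) (v : Fin n → ℝ) (w : Fin m → ℝ) :
    (A *ᵥ v) ⬝ᵥ w = v ⬝ᵥ (Aᵀ *ᵥ w) := by
  rw [dotProduct_comm, dotProduct_mulVec, ← mulVec_transpose, dotProduct_comm]

lemma gCGO_pos {m n : ℕ} (A : Matrix (Fin m) (Fin n) ℝ) (α : ℝ) (hα : 0 < α)
    (x : Fin m → ℝ) (y : Fin n → ℝ) (h : Aᵀ.mulVec x ≠ 0 ∨ A.mulVec y ≠ 0) :
    0 < (gCGO A α x y).1 ⬝ᵥ x + (gCGO A α x y).2 ⬝ᵥ y := by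
  have hc : (0:ℝ) ≤ α ^ 2 := sq_nonneg α
  have hS : (A * Aᵀ).PosSemidef := by
    simpa using posSemidef_self_mul_conjTranspose A
  have hT : (Aᵀ * A).PosSemidef := by
    simpa using posSemidef_conjTranspose_mul_self A
  set B₁ : Matrix (Fin m) (Fin m) ℝ := 1 + α ^ 2 • (A * Aᵀ) with hB₁
  set B₂ : Matrix (Fin n) (Fin n) ℝ := 1 + α ^ 2 • (Aᵀ * A) with hB₂
  have hP1 : B₁.PosDef := posDef_one_add' hS _ hc
  have hP2 : B₂.PosDef := posDef_one_add' hT _ hc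
  have hd1 : IsUnit B₁.det := hP1.det_pos.ne'.isUnit
  have hd2 : IsUnit B₂.det := hP2.det_pos.ne'.isUnit
  set M := B₁⁻¹ with hM
  set N := B₂⁻¹ with hN
  have hMsym : Mᵀ = M := by
    rw [hM, transpose_nonsing_inv]
    congr 1
    simp [hB₁, transpose_add, transpose_smul, transpose_mul]
  have hNsym : Nᵀ = N := by
    rw [hN, transpose_nonsing_inv]
    congr 1
    simp [hB₂, transpose_add, transpose_smul, transpose_mul]
  have hcomm : Aᵀ * B₁ = B₂ * Aᵀ := by
    simp [hB₁, hB₂, Matrix.mul_add, Matrix.add_mul, Matrix.mul_smul, Matrix.smul_mul,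
      Matrix.mul_assoc]
  have hMN : Aᵀ * M = N * Aᵀ := by
    have h2 := congrArg (fun X => N * X * M) hcomm
    simp only [hM, hN] at h2 ⊢
    rw [Matrix.mul_assoc (B₂⁻¹) (Aᵀ * B₁) (B₁⁻¹), Matrix.mul_assoc Aᵀ B₁ (B₁⁻¹),
      Matrix.mul_nonsing_inv _ hd1, Matrix.mul_one, ← Matrix.mul_assoc (B₂⁻¹) B₂ Aᵀ,
      Matrix.nonsing_inv_mul _ hd2, Matrix.one_mul] at h2
    rw [← h2]
  have hMA : M * A = A * N := by
    have := congrArg Matrix.transpose hMN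
    simpa [transpose_mul, hMsym, hNsym] using this
  -- abbreviations
  set u := Aᵀ *ᵥ x with hu
  set w := A *ᵥ y with hw
  have h1 : (M *ᵥ w) ⬝ᵥ x = (N *ᵥ u) ⬝ᵥ y := by
    calc (M *ᵥ w) ⬝ᵥ x = w ⬝ᵥ (M *ᵥ x) := by rw [dot_swap', hMsym]
    _ = (A *ᵥ y) ⬝ᵥ (M *ᵥ x) := by rw [hw]
    _ = y ⬝ᵥ (Aᵀ *ᵥ (M *ᵥ x)) := dot_swap' _ _ _
    _ = y ⬝ᵥ ((Aᵀ * M) *ᵥ x) := by rw [mulVec_mulVec]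
    _ = y ⬝ᵥ ((N * Aᵀ) *ᵥ x) := by rw [hMN]
    _ = y ⬝ᵥ (N *ᵥ u) := by rw [← mulVec_mulVec, hu]
    _ = (N *ᵥ u) ⬝ᵥ y := dotProduct_comm _ _
  have h2 : (M *ᵥ ((A * Aᵀ) *ᵥ x)) ⬝ᵥ x = u ⬝ᵥ (N *ᵥ u) := by
    calc (M *ᵥ ((A * Aᵀ) *ᵥ x)) ⬝ᵥ x = ((M * (A * Aᵀ)) *ᵥ x) ⬝ᵥ x := by rw [mulVec_mulVec]
    _ = ((A * (N * Aᵀ)) *ᵥ x) ⬝ᵥ x := by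
        rw [← Matrix.mul_assoc M A Aᵀ, hMA, Matrix.mul_assoc A N Aᵀ]
    _ = (A *ᵥ ((N * Aᵀ) *ᵥ x)) ⬝ᵥ x := by rw [← mulVec_mulVec]
    _ = ((N * Aᵀ) *ᵥ x) ⬝ᵥ u := by rw [dot_swap', hu]
    _ = (N *ᵥ u) ⬝ᵥ u := by rw [← mulVec_mulVec, hu]
    _ = u ⬝ᵥ (N *ᵥ u) := dotProduct_comm _ _
  have h3 : (N *ᵥ ((Aᵀ * A) *ᵥ y)) ⬝ᵥ y = w ⬝ᵥ (M *ᵥ w) := by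
    calc (N *ᵥ ((Aᵀ * A) *ᵥ y)) ⬝ᵥ y = ((N * (Aᵀ * A)) *ᵥ y) ⬝ᵥ y := by rw [mulVec_mulVec]
    _ = ((Aᵀ * (M * A)) *ᵥ y) ⬝ᵥ y := by
        rw [← Matrix.mul_assoc N Aᵀ A, ← hMN, Matrix.mul_assoc Aᵀ M A]
    _ = (Aᵀ *ᵥ ((M * A) *ᵥ y)) ⬝ᵥ y := by rw [← mulVec_mulVec]
    _ = ((M * A) *ᵥ y) ⬝ᵥ w := by rw [dot_swap', transpose_transpose, hw]
    _ = (M *ᵥ w) ⬝ᵥ w := by rw [← mulVec_mulVec, hw]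
    _ = w ⬝ᵥ (M *ᵥ w) := dotProduct_comm _ _
  have hMpd : M.PosDef := hP1.inv
  have hNpd : N.PosDef := hP2.inv
  have key : (gCGO A α x y).1 ⬝ᵥ x + (gCGO A α x y).2 ⬝ᵥ y
      = α * (u ⬝ᵥ (N *ᵥ u)) + α * (w ⬝ᵥ (M *ᵥ w)) := by
    simp only [gCGO, ← hB₁, ← hB₂, ← hM, ← hN, ← hu, ← hw, mulVec_add, mulVec_neg,
      mulVec_smul, add_dotProduct, neg_dotProduct, smul_dotProduct, smul_eq_mul]
    rw [h1, h2, h3]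
    ring
  rw [key]
  have hu2 : 0 ≤ u ⬝ᵥ (N *ᵥ u) := by simpa using hNpd.posSemidef.dotProduct_mulVec_nonneg u
  have hw2 : 0 ≤ w ⬝ᵥ (M *ᵥ w) := by simpa using hMpd.posSemidef.dotProduct_mulVec_nonneg w
  rcases h with h | h
  · have : 0 < u ⬝ᵥ (N *ᵥ u) := by simpa using hNpd.dotProduct_mulVec_pos h
    nlinarith
  · have : 0 < w ⬝ᵥ (M *ᵥ w) := by simpa using hMpd.dotProduct_mulVec_pos h
    nlinarith

lemma mulVec_ne_zero' {k : ℕ} (C : Matrix (Fin k) (Fin k) ℝ) (hC : IsUnit C.det)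
    (v : Fin k → ℝ) (hv : v ≠ 0) : C *ᵥ v ≠ 0 := by
  intro h0
  apply hv
  have : C⁻¹ *ᵥ (C *ᵥ v) = v := by
    rw [mulVec_mulVec, Matrix.nonsing_inv_mul _ hC, one_mulVec]
  rw [h0, mulVec_zero] at this
  exact this.symm

/-- For `α > 0`, the CGO field of a bilinear game satisfies `⟨g_α(x,y),(x,y)⟩ > 0` whenever
`Aᵀx ≠ 0` or `Ay ≠ 0`; in particular if `A` is square and invertible the origin satisfies
the strict α-Minty variational inequality. -/
theorem bilinear_game_strict_alpha_MVI (m n : ℕ) (A : Matrix (Fin m) (Fin n) ℝ)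
    (α : ℝ) (hα : 0 < α) :
    (∀ (x : Fin m → ℝ) (y : Fin n → ℝ), (Aᵀ.mulVec x ≠ 0 ∨ A.mulVec y ≠ 0) →
      0 < (gCGO A α x y).1 ⬝ᵥ x + (gCGO A α x y).2 ⬝ᵥ y) ∧
    (∀ B : Matrix (Fin m) (Fin m) ℝ, IsUnit B.det →
      ∀ (x y : Fin m → ℝ), (x, y) ≠ (0, 0) →
        0 < (gCGO B α x y).1 ⬝ᵥ x + (gCGO B α x y).2 ⬝ᵥ y) := by
  refine ⟨fun x y h => gCGO_pos A α hα x y h, fun B hB x y hxy => ?_⟩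
  apply gCGO_pos B α hα x y
  by_cases hx : x = 0
  · right
    have hy : y ≠ 0 := by
      intro hy; exact hxy (by simp [hx, hy, Prod.ext_iff])
    exact mulVec_ne_zero' B hB y hy
  · left
    exact mulVec_ne_zero' Bᵀ (by simpa [Matrix.det_transpose] using hB) x hx
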